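/- Limit claim for the off-diagonal entry (second claim in the proof of Proposition 3.1): fix a meeting function ρ, a network g ∈ S, a coordinate e* ∈ E, set w = flip e* g, and fix φ ∈ (0,1). Let (Fₙ) be a sequence of acceptance functions (each satisfying the parameter constraints) with Fₙ g e* = φ for all n (hence Fₙ w e* = 1 − φ), and assume that as n → ∞: Fₙ w e → 0 for every e ≠ e*, and Fₙ g e → 0 for every e ≠ e*. Write Πₙ = Π(ρ, Fₙ) and define L : ℕ → ℝ recursively by L 0 = 0 and L (τ+1) = (1 − L τ) * (ρ e* g) * φ + (L τ) * (1 − (ρ e* w) * (1 − φ)). Then for every natural number τ, ((Πₙ)^τ) g w → L τ and ((Πₙ)^τ) g g → 1 − L τ as n → ∞. -/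
import Mathlib


open Matrix Finset Filter

/-- Flip the link `e` in network `g`. -/
def flipL {E : Type*} [DecidableEq E] (e : E) (g : E → Bool) : E → Bool :=
  Function.update g e (!(g e))

/-- The one-step transition matrix of the network formation game. -/
noncomputable def netPi {E : Type*} [DecidableEq E] [Fintype E]
    (ρ : E → (E → Bool) → ℝ) (F : (E → Bool) → E → ℝ) :
    Matrix (E → Bool) (E → Bool) ℝ :=
  Matrix.of fun g w =>
    if g = w then ∑ e, ρ e g * (1 - F g e)
    else ∑ e, if w = flipL e g then ρ e g * F g e else 0

/-- A meeting function: strictly positive selection probabilities summing to one. -/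
def IsMeeting {E : Type*} [Fintype E] (ρ : E → (E → Bool) → ℝ) : Prop :=
  (∀ e g, 0 < ρ e g) ∧ ∀ g, ∑ e, ρ e g = 1

/-- An acceptance function: probabilities strictly between 0 and 1, complementary under flips. -/
def IsAcceptance {E : Type*} [DecidableEq E] (F : (E → Bool) → E → ℝ) : Prop :=
  (∀ g e, 0 < F g e ∧ F g e < 1) ∧ ∀ g e, F g e + F (flipL e g) e = 1

section Aux

variable {E : Type*} [DecidableEq E] [Fintype E]

lemma flipL_ne (e : E) (g : E → Bool) : flipL e g ≠ g := by
  intro h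
  have := congrFun h e
  simp [flipL] at this

lemma flipL_flipL (e : E) (g : E → Bool) : flipL e (flipL e g) = g := by
  funext x
  rcases eq_or_ne x e with rfl | hx
  · simp [flipL]
  · simp [flipL, Function.update_of_ne hx]

lemma flipL_eq_iff (g : E → Bool) (e e' : E) : flipL e g = flipL e' g ↔ e = e' := by
  constructor
  · intro h
    by_contra hne
    have h1 := congrFun h e
    have h2 : flipL e' g e = g e := by
      simp [flipL, Function.update_of_ne hne]
    rw [h2] at h1
    simp [flipL] at h1
  · rintro rfl; rfl

lemma netPi_diag (ρ : E → (E → Bool) → ℝ) (F : (E → Bool) → E → ℝ) (g : E → Bool) :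
    netPi ρ F g g = ∑ e, ρ e g * (1 - F g e) := by
  simp [netPi]

lemma netPi_flip (ρ : E → (E → Bool) → ℝ) (F : (E → Bool) → E → ℝ)
    (g : E → Bool) (e : E) : netPi ρ F g (flipL e g) = ρ e g * F g e := by
  unfold netPi
  rw [Matrix.of_apply, if_neg (fun h => flipL_ne e g h.symm)]
  rw [Finset.sum_eq_single e]
  · rw [if_pos rfl]
  · intro e' _ hne
    rw [if_neg]
    intro h
    exact hne ((flipL_eq_iff g e e').mp h).symm
  · intro h; exact absurd (Finset.mem_univ e) h

lemma netPi_nonneg {ρ : E → (E → Bool) → ℝ} {F : (E → Bool) → E → ℝ}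
    (hρ : IsMeeting ρ) (hF : IsAcceptance F) (g w : E → Bool) :
    0 ≤ netPi ρ F g w := by
  unfold netPi
  rw [Matrix.of_apply]
  split
  · exact Finset.sum_nonneg fun e _ =>
      mul_nonneg (hρ.1 e g).le (by linarith [(hF.1 g e).2])
  · refine Finset.sum_nonneg fun e _ => ?_
    split
    · exact mul_nonneg (hρ.1 e g).le (hF.1 g e).1.le
    · exact le_refl 0

lemma netPi_row_sum {ρ : E → (E → Bool) → ℝ} (hρ : IsMeeting ρ)
    (F : (E → Bool) → E → ℝ) (g : E → Bool) :
    ∑ w, netPi ρ F g w = 1 := by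
  have hsplit : ∑ w, netPi ρ F g w
      = netPi ρ F g g + ∑ w ∈ Finset.univ.erase g, netPi ρ F g w := by
    rw [Finset.add_sum_erase _ _ (Finset.mem_univ g)]
  have h2 : ∑ w ∈ Finset.univ.erase g, netPi ρ F g w = ∑ e, ρ e g * F g e := by
    have hcongr : ∀ w ∈ Finset.univ.erase g,
        netPi ρ F g w = ∑ e, if w = flipL e g then ρ e g * F g e else 0 := by
      intro w hw
      unfold netPi
      rw [Matrix.of_apply, if_neg (Finset.ne_of_mem_erase hw).symm]
    rw [Finset.sum_congr rfl hcongr, Finset.sum_comm]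
    refine Finset.sum_congr rfl fun e _ => ?_
    rw [Finset.sum_ite_eq' (Finset.univ.erase g) (flipL e g) (fun _ => ρ e g * F g e),
      if_pos (Finset.mem_erase.mpr ⟨flipL_ne e g, Finset.mem_univ _⟩)]
  rw [hsplit, netPi_diag, h2, ← Finset.sum_add_distrib]
  rw [show (∑ e, (ρ e g * (1 - F g e) + ρ e g * F g e)) = ∑ e, ρ e g from
    Finset.sum_congr rfl fun e _ => by ring]
  exact hρ.2 g

lemma netPi_le_one {ρ : E → (E → Bool) → ℝ} {F : (E → Bool) → E → ℝ}
    (hρ : IsMeeting ρ) (hF : IsAcceptance F) (g w : E → Bool) :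
    netPi ρ F g w ≤ 1 := by
  have := Finset.single_le_sum (f := fun w => netPi ρ F g w)
    (fun i _ => netPi_nonneg hρ hF g i) (Finset.mem_univ w)
  rw [netPi_row_sum hρ F g] at this
  exact this

lemma netPi_pow_nonneg {ρ : E → (E → Bool) → ℝ} {F : (E → Bool) → E → ℝ}
    (hρ : IsMeeting ρ) (hF : IsAcceptance F) (τ : ℕ) (g w : E → Bool) :
    0 ≤ (netPi ρ F ^ τ) g w := by
  induction τ generalizing g w with
  | zero =>
    rw [pow_zero, Matrix.one_apply]
    split <;> norm_num
  | succ τ ih =>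
    rw [pow_succ, Matrix.mul_apply]
    exact Finset.sum_nonneg fun s _ => mul_nonneg (ih g s) (netPi_nonneg hρ hF s w)

lemma netPi_pow_row_sum {ρ : E → (E → Bool) → ℝ} (hρ : IsMeeting ρ)
    (F : (E → Bool) → E → ℝ) (τ : ℕ) (g : E → Bool) :
    ∑ w, (netPi ρ F ^ τ) g w = 1 := by
  induction τ generalizing g with
  | zero =>
    simp [Matrix.one_apply]
  | succ τ ih =>
    simp only [pow_succ, Matrix.mul_apply]
    rw [Finset.sum_comm]
    rw [show (∑ s, ∑ w, (netPi ρ F ^ τ) g s * netPi ρ F s w)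
        = ∑ s : E → Bool, (netPi ρ F ^ τ) g s from Finset.sum_congr rfl fun s _ => by
      rw [← Finset.mul_sum, netPi_row_sum hρ F s, mul_one]]
    exact ih g

end Aux

/-- Limit claim for the off-diagonal entry (second claim in the proof of Proposition 3.1):
in the limit where all acceptance probabilities except at `e*` vanish (and the acceptance
probability at `e*` from `g` is held fixed at `φ`), `(Π^τ) g w → L τ` and
`(Π^τ) g g → 1 - L τ`, where `L` is given by the stated recursion. -/
theorem offdiagonal_limit {E : Type*} [DecidableEq E] [Fintype E] [Nonempty E]
    (ρ : E → (E → Bool) → ℝ) (hρ : IsMeeting ρ)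
    (g : E → Bool) (estar : E) (φ : ℝ) (hφ : 0 < φ ∧ φ < 1)
    (F : ℕ → (E → Bool) → E → ℝ) (hF : ∀ n, IsAcceptance (F n))
    (hfix : ∀ n, F n g estar = φ)
    (hw : ∀ e : E, e ≠ estar → Tendsto (fun n => F n (flipL estar g) e) atTop (nhds 0))
    (hg : ∀ e : E, e ≠ estar → Tendsto (fun n => F n g e) atTop (nhds 0))
    (L : ℕ → ℝ) (hL0 : L 0 = 0)
    (hLrec : ∀ τ : ℕ, L (τ + 1) =
      (1 - L τ) * (ρ estar g * φ) + L τ * (1 - ρ estar (flipL estar g) * (1 - φ))) :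
    ∀ τ : ℕ,
      Tendsto (fun n => (netPi ρ (F n) ^ τ) g (flipL estar g)) atTop (nhds (L τ)) ∧
      Tendsto (fun n => (netPi ρ (F n) ^ τ) g g) atTop (nhds (1 - L τ)) := by
  set w := flipL estar g with hwdef
  have hgw : g ≠ w := fun h => flipL_ne estar g h.symm
  have hFwe : ∀ n, F n w estar = 1 - φ := by
    intro n
    have h := (hF n).2 g estar
    rw [hfix n] at h
    rw [hwdef]; linarith
  -- constant one-step off-diagonal entries
  have hPgw : ∀ n, netPi ρ (F n) g w = ρ estar g * φ := by
    intro n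
    rw [hwdef, netPi_flip, hfix]
  have hPwg : ∀ n, netPi ρ (F n) w g = ρ estar w * (1 - φ) := by
    intro n
    have h := netPi_flip ρ (F n) w estar
    rw [show flipL estar w = g from by rw [hwdef, flipL_flipL]] at h
    rw [h, hFwe]
  -- diagonal limits
  have hdiag : ∀ (s : E → Bool) (c : ℝ), (∀ n, F n s estar = c) →
      (∀ e, e ≠ estar → Tendsto (fun n => F n s e) atTop (nhds 0)) →
      Tendsto (fun n => netPi ρ (F n) s s) atTop (nhds (1 - ρ estar s * c)) := by
    intro s c hc hlim
    have hval : ∀ n, netPi ρ (F n) s s = ∑ e, ρ e s * (1 - F n s e) := fun n =>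
      netPi_diag ρ (F n) s
    simp only [hval]
    have hT : Tendsto (fun n => ∑ e, ρ e s * (1 - F n s e)) atTop
        (nhds (∑ e, ρ e s * (1 - if e = estar then c else 0))) := by
      refine tendsto_finset_sum _ fun e _ => ?_
      rcases eq_or_ne e estar with rfl | he
      · simp only [if_pos rfl, hc]
        exact tendsto_const_nhds
      · simp only [if_neg he, sub_zero]
        have := (tendsto_const_nhds (x := (1:ℝ)) (f := atTop)).sub (hlim e he)
        rw [sub_zero] at this
        exact (tendsto_const_nhds (x := ρ e s) (f := atTop)).mul this
    have hvaleq : (∑ e, ρ e s * (1 - if e = estar then c else 0))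
        = 1 - ρ estar s * c := by
      have h1 : ∀ e : E, ρ e s * (1 - if e = estar then c else 0)
          = ρ e s - (if e = estar then ρ e s * c else 0) := by
        intro e; split <;> ring
      rw [Finset.sum_congr rfl fun e _ => h1 e, Finset.sum_sub_distrib, hρ.2 s,
        Finset.sum_ite_eq' Finset.univ estar (fun e => ρ e s * c),
        if_pos (Finset.mem_univ estar)]
    rwa [hvaleq] at hT
  have hPgg : Tendsto (fun n => netPi ρ (F n) g g) atTop (nhds (1 - ρ estar g * φ)) :=
    hdiag g φ hfix hg
  have hPww : Tendsto (fun n => netPi ρ (F n) w w) atTop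
      (nhds (1 - ρ estar w * (1 - φ))) :=
    hdiag w (1 - φ) hFwe hw
  intro τ
  induction τ with
  | zero =>
    rw [hL0]
    constructor
    · have : ∀ n : ℕ, (netPi ρ (F n) ^ 0) g w = 0 := by
        intro n; rw [pow_zero, Matrix.one_apply, if_neg hgw]
      simp only [this]
      exact tendsto_const_nhds
    · have : ∀ n : ℕ, (netPi ρ (F n) ^ 0) g g = 1 := by
        intro n; rw [pow_zero, Matrix.one_apply, if_pos rfl]
      simp only [this]
      rw [sub_zero]
      exact tendsto_const_nhds
  | succ τ ih =>
    obtain ⟨ihw, ihg⟩ := ih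
    -- all other entries of the τ-th power (from row g) vanish
    have hother : ∀ s : E → Bool, s ≠ g → s ≠ w →
        Tendsto (fun n => (netPi ρ (F n) ^ τ) g s) atTop (nhds 0) := by
      intro s hsg hsw
      have hub : ∀ n, (netPi ρ (F n) ^ τ) g s
          ≤ 1 - (netPi ρ (F n) ^ τ) g g - (netPi ρ (F n) ^ τ) g w := by
        intro n
        have hmemw : w ∈ Finset.univ.erase g :=
          Finset.mem_erase.mpr ⟨fun h => hgw h.symm, Finset.mem_univ _⟩
        have hsum : (netPi ρ (F n) ^ τ) g g + ((netPi ρ (F n) ^ τ) g w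
            + ∑ s' ∈ (Finset.univ.erase g).erase w, (netPi ρ (F n) ^ τ) g s') = 1 := by
          rw [Finset.add_sum_erase _ _ hmemw, Finset.add_sum_erase _ _ (Finset.mem_univ g)]
          exact netPi_pow_row_sum hρ (F n) τ g
        have hmem : s ∈ (Finset.univ.erase g).erase w :=
          Finset.mem_erase.mpr ⟨hsw, Finset.mem_erase.mpr ⟨hsg, Finset.mem_univ _⟩⟩
        have hle := Finset.single_le_sum
          (f := fun s' => (netPi ρ (F n) ^ τ) g s')
          (fun i _ => netPi_pow_nonneg hρ (hF n) τ g i) hmem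
        linarith
      have hupper : Tendsto
          (fun n => 1 - (netPi ρ (F n) ^ τ) g g - (netPi ρ (F n) ^ τ) g w)
          atTop (nhds 0) := by
        have := ((tendsto_const_nhds (x := (1:ℝ)) (f := atTop)).sub ihg).sub ihw
        rw [show (1:ℝ) - (1 - L τ) - L τ = 0 from by ring] at this
        exact this
      exact tendsto_of_tendsto_of_tendsto_of_le_of_le tendsto_const_nhds hupper
        (fun n => netPi_pow_nonneg hρ (hF n) τ g s) hub
    -- squeeze helper for the cross terms
    have hcross : ∀ (s x : E → Bool), s ≠ g → s ≠ w →
        Tendsto (fun n => (netPi ρ (F n) ^ τ) g s * netPi ρ (F n) s x) atTop (nhds 0) := by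
      intro s x hsg hsw
      refine tendsto_of_tendsto_of_tendsto_of_le_of_le tendsto_const_nhds (hother s hsg hsw)
        (fun n => mul_nonneg (netPi_pow_nonneg hρ (hF n) τ g s)
          (netPi_nonneg hρ (hF n) s x)) (fun n => ?_)
      exact mul_le_of_le_one_right (netPi_pow_nonneg hρ (hF n) τ g s)
        (netPi_le_one hρ (hF n) s x)
    have hexp : ∀ (x : E → Bool) (n : ℕ), (netPi ρ (F n) ^ (τ + 1)) g x
        = ∑ s, (netPi ρ (F n) ^ τ) g s * netPi ρ (F n) s x := by
      intro x n
      rw [pow_succ, Matrix.mul_apply]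
    -- generic sum-of-limits computation
    have hsumval : ∀ (A B : ℝ),
        (∑ s : E → Bool, ((if s = g then A else 0) + (if s = w then B else 0))) = A + B := by
      intro A B
      rw [Finset.sum_add_distrib,
        Finset.sum_ite_eq' Finset.univ g (fun _ => A), if_pos (Finset.mem_univ g),
        Finset.sum_ite_eq' Finset.univ w (fun _ => B), if_pos (Finset.mem_univ w)]
    constructor
    · -- off-diagonal entry
      simp only [hexp w]
      have hT : Tendsto (fun n => ∑ s, (netPi ρ (F n) ^ τ) g s * netPi ρ (F n) s w) atTop
          (nhds (∑ s : E → Bool, ((if s = g then (1 - L τ) * (ρ estar g * φ) else 0)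
            + (if s = w then L τ * (1 - ρ estar w * (1 - φ)) else 0)))) := by
        refine tendsto_finset_sum _ fun s _ => ?_
        rcases eq_or_ne s g with rfl | hsg
        · rw [if_pos rfl, if_neg hgw, add_zero]
          simp only [hPgw]
          exact ihg.mul tendsto_const_nhds
        · rcases eq_or_ne s w with rfl | hsw
          · rw [if_neg hsg, if_pos rfl, zero_add]
            exact ihw.mul hPww
          · rw [if_neg hsg, if_neg hsw, add_zero]
            exact hcross s w hsg hsw
      rw [hsumval] at hT
      rwa [show (1 - L τ) * (ρ estar g * φ) + L τ * (1 - ρ estar w * (1 - φ))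
        = L (τ + 1) from (hLrec τ).symm] at hT
    · -- diagonal entry
      simp only [hexp g]
      have hT : Tendsto (fun n => ∑ s, (netPi ρ (F n) ^ τ) g s * netPi ρ (F n) s g) atTop
          (nhds (∑ s : E → Bool, ((if s = g then (1 - L τ) * (1 - ρ estar g * φ) else 0)
            + (if s = w then L τ * (ρ estar w * (1 - φ)) else 0)))) := by
        refine tendsto_finset_sum _ fun s _ => ?_
        rcases eq_or_ne s g with rfl | hsg
        · rw [if_pos rfl, if_neg hgw, add_zero]
          exact ihg.mul hPgg
        · rcases eq_or_ne s w with rfl | hsw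
          · rw [if_neg hsg, if_pos rfl, zero_add]
            simp only [hPwg]
            exact ihw.mul tendsto_const_nhds
          · rw [if_neg hsg, if_neg hsw, add_zero]
            exact hcross s g hsg hsw
      rw [hsumval] at hT
      rwa [show (1 - L τ) * (1 - ρ estar g * φ) + L τ * (ρ estar w * (1 - φ))
        = 1 - L (τ + 1) from by rw [hLrec τ]; ring] at hT
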